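/- For a Poisson random variable X with mean μ > 0 and positive integers k ≤ q, the falling factorial moment of the truncated variable X_q = min(X, q) satisfies E[X_q(X_q-1)···(X_q-k+1)] = μ^k · P(X ≤ q-k) + q(q-1)···(q-k+1) · P(X ≥ q+1). -/

import Mathlib

open scoped BigOperators

/-- The Poisson probability mass function with real mean parameter `μ`:
`P(X = n) = exp(-μ) * μ^n / n!`. -/
noncomputable def poissonPMF (μ : ℝ) (n : ℕ) : ℝ := Real.exp (-μ) * μ ^ n / n.factorial

lemma poissonPMF_nonneg (μ : ℝ) (hμ : 0 < μ) (n : ℕ) : 0 ≤ poissonPMF μ n := by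
  unfold poissonPMF
  positivity

lemma poissonPMF_summable (μ : ℝ) : Summable (poissonPMF μ) := by
  have := (Real.summable_pow_div_factorial μ).mul_left (Real.exp (-μ))
  apply this.congr
  intro n
  unfold poissonPMF
  ring

lemma key (μ : ℝ) (k i : ℕ) :
    poissonPMF μ (k + i) * ((k + i).descFactorial k : ℝ) = μ ^ k * poissonPMF μ i := by
  have hnat : (k + i).descFactorial k * i.factorial = (k + i).factorial := by
    rw [Nat.descFactorial_eq_div (Nat.le_add_right k i), Nat.add_sub_cancel_left]
    exact Nat.div_mul_cancel (Nat.factorial_dvd_factorial (Nat.le_add_left i k))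
  have h1 : (i.factorial : ℝ) ≠ 0 := by exact_mod_cast i.factorial_ne_zero
  have h2 : ((k + i).factorial : ℝ) ≠ 0 := by exact_mod_cast (k + i).factorial_ne_zero
  have hc : ((k + i).descFactorial k : ℝ) * (i.factorial : ℝ) = ((k + i).factorial : ℝ) := by
    exact_mod_cast congrArg (Nat.cast : ℕ → ℝ) hnat
  unfold poissonPMF
  rw [pow_add]
  field_simp
  linear_combination (μ ^ k * μ ^ i) * hc

/-- For `X ~ Poisson(μ)` and positive integers `k ≤ q`, the `k`-th falling factorial
moment of the truncated variable `X_q = min(X, q)` satisfies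
`E[X_q (X_q - 1) ⋯ (X_q - k + 1)] = μ^k ⬝ P(X ≤ q - k) + q (q-1) ⋯ (q-k+1) ⬝ P(X ≥ q+1)`. -/
theorem stmt0 (μ : ℝ) (hμ : 0 < μ) (q k : ℕ) (hk : 1 ≤ k) (hkq : k ≤ q) :
    (∑' n : ℕ, poissonPMF μ n * ((min n q).descFactorial k : ℝ)) =
      μ ^ k * (∑ n ∈ Finset.range (q - k + 1), poissonPMF μ n) +
        (q.descFactorial k : ℝ) * (∑' n : ℕ, if q + 1 ≤ n then poissonPMF μ n else 0) := by
  set g : ℕ → ℝ := fun n => if n ≤ q then poissonPMF μ n * (n.descFactorial k : ℝ) else 0 with hg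
  set h : ℕ → ℝ := fun n => (q.descFactorial k : ℝ) * (if q + 1 ≤ n then poissonPMF μ n else 0)
    with hh
  have hdecomp : ∀ n, poissonPMF μ n * ((min n q).descFactorial k : ℝ) = g n + h n := by
    intro n
    rcases le_or_gt n q with hnq | hnq
    · have h1 : ¬ (q + 1 ≤ n) := by omega
      simp [hg, hh, hnq, min_eq_left hnq, h1]
    · have : ¬ n ≤ q := not_le.mpr hnq
      simp [hg, hh, this, min_eq_right hnq.le, Nat.succ_le_of_lt hnq]
      simp [hnq]
      ring
  have hgsum : Summable g := by
    apply summable_of_ne_finset_zero (s := Finset.range (q + 1))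
    intro n hn
    simp only [Finset.mem_range, not_lt] at hn
    simp [hg, not_le.mpr (Nat.lt_of_succ_le hn)]
  have hind : Summable (fun n => if q + 1 ≤ n then poissonPMF μ n else 0) := by
    apply Summable.of_nonneg_of_le _ _ (poissonPMF_summable μ)
    · intro n; split
      exacts [poissonPMF_nonneg μ hμ n, le_rfl]
    · intro n; split
      exacts [le_rfl, poissonPMF_nonneg μ hμ n]
  have hhsum : Summable h := hind.mul_left _
  rw [tsum_congr hdecomp, Summable.tsum_add hgsum hhsum]
  congr 1
  · -- finite part
    have h1 : (∑' n, g n) = ∑ n ∈ Finset.range (q + 1), g n := by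
      apply tsum_eq_sum
      intro n hn
      simp only [Finset.mem_range, not_lt] at hn
      simp [hg, not_le.mpr (Nat.lt_of_succ_le hn)]
    have h2 : ∑ n ∈ Finset.range (q + 1), g n
        = ∑ n ∈ Finset.range (q + 1), poissonPMF μ n * (n.descFactorial k : ℝ) := by
      apply Finset.sum_congr rfl
      intro n hn
      simp only [Finset.mem_range] at hn
      simp [hg, Nat.lt_succ_iff.mp hn]
    have h3 : ∑ n ∈ Finset.range (q + 1), poissonPMF μ n * (n.descFactorial k : ℝ)
        = ∑ n ∈ Finset.Ico k (q + 1), poissonPMF μ n * (n.descFactorial k : ℝ) := by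
      symm
      apply Finset.sum_subset
      · intro x hx
        simp only [Finset.mem_Ico] at hx
        exact Finset.mem_range.mpr hx.2
      · intro x hx hnx
        simp only [Finset.mem_range] at hx
        simp only [Finset.mem_Ico, not_and, not_lt] at hnx
        have hxk : x < k := by
          by_contra hc
          exact absurd hx (not_lt.mpr (hnx (not_lt.mp hc)))
        simp [Nat.descFactorial_eq_zero_iff_lt.mpr hxk]
    have h4 : ∑ n ∈ Finset.Ico k (q + 1), poissonPMF μ n * (n.descFactorial k : ℝ)
        = ∑ i ∈ Finset.range (q + 1 - k), poissonPMF μ (k + i) * ((k + i).descFactorial k : ℝ) := by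
      rw [Finset.sum_Ico_eq_sum_range]
    have h5 : q + 1 - k = q - k + 1 := by omega
    rw [h1, h2, h3, h4, h5, Finset.mul_sum]
    apply Finset.sum_congr rfl
    intro i _
    exact key μ k i
  · exact tsum_mul_left
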